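/- (Feature part of the equivariant feed-forward network, Lemma 2.) Let n ≥ 1, h : Fin n → ℝ^d, X : Fin n → ℝ³, and let φ_r : ℝ → ℝ^k and φ_h : ℝ^d × ℝ^d × ℝ^k → ℝ^d be arbitrary functions. Set h_c = (1/n) ∑ᵢ h i, Δ_p = X p − centroid(X), r_p = φ_r(‖Δ_p‖² / (1 + ‖Δ_p‖²)), and h'(p) = h p + φ_h(h p, h_c, r_p). Then h' is E(3)-invariant: for any 3×3 real orthogonal matrix Q and t ∈ ℝ³, computing the update with coordinates fun i => Q (X i) + t (and the same h) yields the same function h'. -/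
import Mathlib

open scoped BigOperators
open RealInnerProductSpace

noncomputable def centroid {n : ℕ} (X : Fin n → EuclideanSpace ℝ (Fin 3)) :
    EuclideanSpace ℝ (Fin 3) :=
  (1 / (n : ℝ)) • ∑ i, X i

/-- Feature part of the equivariant feed-forward network:
`h'(p) = h p + φ_h(h p, h_c, r_p)` where
`r_p = φ_r(‖Δ_p‖² / (1 + ‖Δ_p‖²))` and `h_c` is the mean feature. -/
noncomputable def ffnFeat {n d k : ℕ}
    (h : Fin n → EuclideanSpace ℝ (Fin d))
    (X : Fin n → EuclideanSpace ℝ (Fin 3))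
    (φr : ℝ → EuclideanSpace ℝ (Fin k))
    (φh : EuclideanSpace ℝ (Fin d) × EuclideanSpace ℝ (Fin d) × EuclideanSpace ℝ (Fin k) →
      EuclideanSpace ℝ (Fin d))
    (p : Fin n) : EuclideanSpace ℝ (Fin d) :=
  h p +
    φh (h p, (1 / (n : ℝ)) • ∑ i, h i,
        φr (‖X p - centroid X‖ ^ 2 / (1 + ‖X p - centroid X‖ ^ 2)))

lemma norm_toEuclideanLin_of_mem (Q : Matrix (Fin 3) (Fin 3) ℝ)
    (hQ : Q ∈ Matrix.orthogonalGroup (Fin 3) ℝ) (x : EuclideanSpace ℝ (Fin 3)) :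
    ‖Matrix.toEuclideanLin Q x‖ = ‖x‖ := by
  have hs : Q.conjTranspose * Q = 1 := hQ.1
  have key : Matrix.toEuclideanLin Q.conjTranspose (Matrix.toEuclideanLin Q x) = x := by
    rw [Matrix.toEuclideanLin_eq_toLin,
      ← Matrix.toLin_mul_apply, hs, Matrix.toLin_one, LinearMap.id_apply]
  have h1 : ⟪Matrix.toEuclideanLin Q x, Matrix.toEuclideanLin Q x⟫ = ⟪x, x⟫ := by
    rw [← LinearMap.adjoint_inner_right, ← Matrix.toEuclideanLin_conjTranspose_eq_adjoint, key]
  rw [norm_eq_sqrt_real_inner, norm_eq_sqrt_real_inner, h1]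

theorem ffnFeat_invariant (n d k : ℕ) (hn : 1 ≤ n)
    (h : Fin n → EuclideanSpace ℝ (Fin d))
    (X : Fin n → EuclideanSpace ℝ (Fin 3))
    (φr : ℝ → EuclideanSpace ℝ (Fin k))
    (φh : EuclideanSpace ℝ (Fin d) × EuclideanSpace ℝ (Fin d) × EuclideanSpace ℝ (Fin k) →
      EuclideanSpace ℝ (Fin d))
    (Q : Matrix (Fin 3) (Fin 3) ℝ) (hQ : Q ∈ Matrix.orthogonalGroup (Fin 3) ℝ)
    (t : EuclideanSpace ℝ (Fin 3)) :
    ffnFeat h (fun i => Matrix.toEuclideanLin Q (X i) + t) φr φh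
      = ffnFeat h X φr φh := by
  have hn0 : (n : ℝ) ≠ 0 := by
    have : 0 < n := hn
    positivity
  have hc : centroid (fun i => Matrix.toEuclideanLin Q (X i) + t)
      = Matrix.toEuclideanLin Q (centroid X) + t := by
    unfold centroid
    rw [Finset.sum_add_distrib, Finset.sum_const, Finset.card_univ, Fintype.card_fin,
      smul_add, map_smul, map_sum, ← Nat.cast_smul_eq_nsmul ℝ, smul_smul, one_div,
      inv_mul_cancel₀ hn0, one_smul]
  funext p
  unfold ffnFeat
  have hnorm : ‖Matrix.toEuclideanLin Q (X p) + t
      - centroid (fun i => Matrix.toEuclideanLin Q (X i) + t)‖ = ‖X p - centroid X‖ := by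
    rw [hc]
    have : Matrix.toEuclideanLin Q (X p) + t - (Matrix.toEuclideanLin Q (centroid X) + t)
        = Matrix.toEuclideanLin Q (X p - centroid X) := by
      rw [map_sub]; abel
    rw [this, norm_toEuclideanLin_of_mem Q hQ]
  rw [hnorm]
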